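/- Let X be a metric space with n = 2k+2 points (k ≥ 0). Then t_d(X) − t_b(X) ≤ sep(X), where sep(X) = min_{x ≠ x'} d_X(x, x') is the minimal positive distance in X. -/
import Mathlib


/-- The largest distance from `x` to any point of `X`. -/
noncomputable def ptTd (X : Type*) [MetricSpace X] (x : X) : ℝ :=
  sSup (Set.range fun y => dist x y)

/-- The second largest distance (counted with multiplicity over points) from `x`
to points of `X`. -/
noncomputable def ptTb (X : Type*) [MetricSpace X] (x : X) : ℝ :=
  sSup {r : ℝ | ∃ y z : X, y ≠ z ∧ r = min (dist x y) (dist x z)}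

/-- `t_b(X) = max_{x ∈ X} t_b(x)`. -/
noncomputable def tbX (X : Type*) [MetricSpace X] : ℝ :=
  sSup (Set.range (ptTb X))

/-- `t_d(X) = min_{x ∈ X} t_d(x)`. -/
noncomputable def tdX (X : Type*) [MetricSpace X] : ℝ :=
  sInf (Set.range (ptTd X))

/-- In a metric space with `2k+2` points, `t_d(X) - t_b(X) ≤ sep(X)`,
where `sep(X)` is the minimal distance between distinct points. -/
theorem tdX_sub_tbX_le_sep (X : Type*) [MetricSpace X] [Fintype X] (k : ℕ)
    (hcard : Fintype.card X = 2 * k + 2) :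
    tdX X - tbX X ≤ sInf {r : ℝ | ∃ x y : X, x ≠ y ∧ r = dist x y} := by
  have hne : Nonempty X := Fintype.card_pos_iff.mp (by omega)
  have h2 : 1 < Fintype.card X := by omega
  obtain ⟨a0, b0, hab0⟩ := Fintype.exists_pair_of_one_lt_card h2
  set S : Set ℝ := {r : ℝ | ∃ x y : X, x ≠ y ∧ r = dist x y} with hSdef
  have hSne : S.Nonempty := ⟨dist a0 b0, a0, b0, hab0, rfl⟩
  have hSfin : S.Finite := by
    apply (Set.finite_range (fun p : X × X => dist p.1 p.2)).subset
    rintro r ⟨x, y, -, rfl⟩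
    exact ⟨(x, y), rfl⟩
  obtain ⟨a, b, hab, hS⟩ : sInf S ∈ S := hSne.csInf_mem hSfin
  -- m : farthest point from a
  obtain ⟨m, hm⟩ : ptTd X a ∈ Set.range (fun y => dist a y) :=
    (Set.range_nonempty _).csSup_mem (Set.finite_range _)
  -- diameter bound
  set D : ℝ := Metric.diam (Set.univ : Set X) with hDdef
  have hD : ∀ x y : X, dist x y ≤ D := fun x y =>
    Metric.dist_le_diam_of_mem Set.finite_univ.isBounded trivial trivial
  have hbTb : ∀ x : X,
      BddAbove {r : ℝ | ∃ y z : X, y ≠ z ∧ r = min (dist x y) (dist x z)} := by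
    intro x
    refine ⟨D, ?_⟩
    rintro r ⟨y, z, -, rfl⟩
    exact le_trans (min_le_left _ _) (hD x y)
  have hbR : BddAbove (Set.range (ptTb X)) := by
    refine ⟨D, ?_⟩
    rintro r ⟨x, rfl⟩
    refine Real.sSup_le ?_ Metric.diam_nonneg
    rintro r ⟨y, z, -, rfl⟩
    exact le_trans (min_le_left _ _) (hD x y)
  have htb : min (dist m a) (dist m b) ≤ tbX X := by
    calc min (dist m a) (dist m b) ≤ ptTb X m :=
          le_csSup (hbTb m) ⟨a, b, hab, rfl⟩
      _ ≤ tbX X := le_csSup hbR ⟨m, rfl⟩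
  have htd : tdX X ≤ dist a m := by
    have hbd : BddBelow (Set.range (ptTd X)) := by
      refine ⟨0, ?_⟩
      rintro r ⟨x, rfl⟩
      refine Real.sSup_nonneg ?_
      rintro r ⟨y, rfl⟩
      exact dist_nonneg
    calc tdX X ≤ ptTd X a := csInf_le hbd ⟨a, rfl⟩
      _ = dist a m := hm.symm
  rw [hS]
  rcases le_total (dist m a) (dist m b) with h | h
  · have h1 : dist m a ≤ tbX X := by rw [min_eq_left h] at htb; exact htb
    have := dist_nonneg (x := a) (y := b)
    rw [dist_comm m a] at h1
    linarith
  · have h1 : dist m b ≤ tbX X := by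
      have := min_le_right (dist m a) (dist m b)
      rw [min_eq_right h] at htb
      exact htb
    have htri : dist a m ≤ dist a b + dist b m := dist_triangle a b m
    rw [dist_comm b m] at htri
    linarith
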